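/- Let a, b ∈ ℂ with the ℝ-linear map T : ℝ² → ℂ, T(x₁, x₂) = a x₁ + b x₂, injective. Then for any continuous branch F of log(a z₁ + b z₂) defined near the punctured circle {(cos θ, sin θ) : 0 < θ < 2π} ⊂ ℝ² ⊂ ℂ², the limits of F at θ → 0⁺ and θ → 2π⁻ differ by exactly ±2πi. -/

import Mathlib

open Real Filter Topology


noncomputable def Laux (p q : ℂ) (θ : ℝ) : ℂ :=
  Complex.log p + θ * Complex.I +
    Complex.log (1 + (q / p) * Complex.exp (((-(2 * θ) : ℝ) : ℂ) * Complex.I))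

lemma Laux_abs_lt (p q : ℂ) (h : ‖q‖ < ‖p‖) (θ : ℝ) :
    ‖(q / p) * Complex.exp (((-(2 * θ) : ℝ) : ℂ) * Complex.I)‖ < 1 := by
  have hp : (0 : ℝ) < ‖p‖ := lt_of_le_of_lt (norm_nonneg q) h
  rw [norm_mul, norm_div, Complex.norm_exp_ofReal_mul_I, mul_one, div_lt_one hp]
  exact h

lemma Laux_inner_re (p q : ℂ) (h : ‖q‖ < ‖p‖) (θ : ℝ) :
    0 < (1 + (q / p) * Complex.exp (((-(2 * θ) : ℝ) : ℂ) * Complex.I)).re := by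
  have h1 := Laux_abs_lt p q h θ
  set w := (q / p) * Complex.exp (((-(2 * θ) : ℝ) : ℂ) * Complex.I) with hw
  have h2 : |w.re| ≤ ‖w‖ := Complex.abs_re_le_norm w
  have : (1 + w).re = 1 + w.re := by simp
  rw [this]
  have := abs_le.mp h2
  linarith

lemma Laux_inner_ne (p q : ℂ) (h : ‖q‖ < ‖p‖) (θ : ℝ) :
    (1 + (q / p) * Complex.exp (((-(2 * θ) : ℝ) : ℂ) * Complex.I)) ≠ 0 := by
  intro h0
  have := Laux_inner_re p q h θ
  rw [h0] at this; simp at this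

lemma Laux_continuous (p q : ℂ) (h : ‖q‖ < ‖p‖) :
    Continuous (Laux p q) := by
  have hw : Continuous (fun θ : ℝ =>
      1 + (q / p) * Complex.exp (((-(2 * θ) : ℝ) : ℂ) * Complex.I)) := by fun_prop
  refine (Continuous.add (by fun_prop) ?_)
  rw [continuous_iff_continuousAt]
  intro θ
  exact hw.continuousAt.clog (Complex.mem_slitPlane_iff.mpr (Or.inl (Laux_inner_re p q h θ)))

lemma Laux_exp (p q : ℂ) (h : ‖q‖ < ‖p‖) (θ : ℝ) :
    Complex.exp (Laux p q θ) =
      p * Complex.exp ((θ : ℂ) * Complex.I) + q * Complex.exp (-((θ : ℂ) * Complex.I)) := by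
  have hp : p ≠ 0 := by
    intro h0
    rw [h0, norm_zero] at h
    exact absurd (norm_nonneg q) (not_le.mpr h)
  rw [Laux, Complex.exp_add, Complex.exp_add, Complex.exp_log hp,
    Complex.exp_log (Laux_inner_ne p q h θ)]
  have hE : Complex.exp ((θ : ℂ) * Complex.I) * Complex.exp (((-(2 * θ) : ℝ) : ℂ) * Complex.I)
      = Complex.exp (-((θ : ℂ) * Complex.I)) := by
    rw [← Complex.exp_add]
    congr 1
    push_cast
    ring
  push_cast at hE ⊢
  rw [neg_mul] at hE ⊢
  linear_combination q * hE + (q * Complex.exp ((θ : ℂ) * Complex.I) *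
    Complex.exp (-(2 * (θ : ℂ) * Complex.I))) * (mul_inv_cancel₀ hp)

lemma Laux_periodic (p q : ℂ) (θ : ℝ) :
    Laux p q (θ + 2 * π) = Laux p q θ + 2 * π * Complex.I := by
  have hE : (((-(2 * (θ + 2 * π)) : ℝ) : ℂ) * Complex.I)
      = (((-(2 * θ) : ℝ) : ℂ) * Complex.I) + (-2 : ℤ) * (2 * π * Complex.I) := by
    push_cast; ring
  rw [Laux, Laux, hE, Complex.exp_add, Complex.exp_int_mul_two_pi_mul_I, mul_one]
  push_cast
  ring

lemma master (a b : ℂ) (U : Set (ℂ × ℂ))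
    (harc : ∀ θ ∈ Set.Ioo (0 : ℝ) (2 * π),
      (((Real.cos θ : ℂ), (Real.sin θ : ℂ)) : ℂ × ℂ) ∈ U)
    (hL : ∀ z ∈ U, a * z.1 + b * z.2 ≠ 0)
    (F : ℂ × ℂ → ℂ) (hF : ContinuousOn F U)
    (hbr : ∀ z ∈ U, Complex.exp (F z) = a * z.1 + b * z.2)
    (L : ℝ → ℂ) (hLc : Continuous L)
    (hLexp : ∀ θ : ℝ, Complex.exp (L θ) = a * (Real.cos θ : ℂ) + b * (Real.sin θ : ℂ)) :
    ∃ l₁ l₂ : ℂ,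
      Tendsto (fun θ : ℝ => F ((Real.cos θ : ℂ), (Real.sin θ : ℂ))) (𝓝[>] 0) (𝓝 l₁) ∧
      Tendsto (fun θ : ℝ => F ((Real.cos θ : ℂ), (Real.sin θ : ℂ))) (𝓝[<] (2 * π)) (𝓝 l₂) ∧
      l₂ - l₁ = L (2 * π) - L 0 := by
  set g : ℝ → ℂ := fun θ => F ((Real.cos θ : ℂ), (Real.sin θ : ℂ)) with hg
  set I00 : Set ℝ := Set.Ioo (0 : ℝ) (2 * π) with hI00
  have harcc : Continuous (fun θ : ℝ => (((Real.cos θ : ℂ), (Real.sin θ : ℂ)) : ℂ × ℂ)) := by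
    fun_prop
  have hgc : ContinuousOn g I00 :=
    hF.comp harcc.continuousOn (fun θ hθ => harc θ hθ)
  set d : ℝ → ℂ := fun θ => g θ - L θ with hd
  have hdc : ContinuousOn d I00 := hgc.sub hLc.continuousOn
  have hdmem : ∀ θ ∈ I00, d θ ∈ ((AddSubgroup.zmultiples
      ((2 * π : ℝ) * Complex.I) : AddSubgroup ℂ) : Set ℂ) := by
    intro θ hθ
    have h1 : Complex.exp (d θ) = 1 := by
      rw [hd]
      simp only
      rw [Complex.exp_sub, hbr _ (harc θ hθ), hLexp θ, div_self (hL _ (harc θ hθ))]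
    obtain ⟨n, hn⟩ := Complex.exp_eq_one_iff.mp h1
    refine AddSubgroup.mem_zmultiples_iff.mpr ⟨n, ?_⟩
    rw [hn, zsmul_eq_mul]
    push_cast
    ring
  have hconst : ∀ θ ∈ I00, d θ = d π := by
    intro θ hθ
    have hπ : (π : ℝ) ∈ I00 := ⟨Real.pi_pos, by nlinarith [Real.pi_pos]⟩
    haveI : DiscreteTopology ((AddSubgroup.zmultiples ((2 * π : ℝ) * Complex.I) :
        AddSubgroup ℂ) : Set ℂ) :=
      (inferInstance : DiscreteTopology (AddSubgroup.zmultiples ((2 * π : ℝ) * Complex.I)))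
    exact isPreconnected_Ioo.constant_of_mapsTo (isDiscrete_iff_discreteTopology.mpr this) hdc hdmem hθ hπ
  set C : ℂ := d π with hC
  have hgeq : ∀ θ ∈ I00, g θ = L θ + C := by
    intro θ hθ
    have := hconst θ hθ
    rw [hd] at this
    simp only at this
    linear_combination this
  have hmem1 : I00 ∈ 𝓝[>] (0 : ℝ) :=
    Ioo_mem_nhdsGT_of_mem ⟨le_refl _, Real.two_pi_pos⟩
  have hmem2 : I00 ∈ 𝓝[<] (2 * π) :=
    Ioo_mem_nhdsLT_of_mem ⟨Real.two_pi_pos, le_refl _⟩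
  refine ⟨L 0 + C, L (2 * π) + C, ?_, ?_, by ring⟩
  · refine Tendsto.congr' ?_ (((hLc.tendsto 0).mono_left nhdsWithin_le_nhds).add
      tendsto_const_nhds)
    filter_upwards [hmem1] with θ hθ
    exact (hgeq θ hθ).symm
  · refine Tendsto.congr' ?_ (((hLc.tendsto (2 * π)).mono_left nhdsWithin_le_nhds).add
      tendsto_const_nhds)
    filter_upwards [hmem2] with θ hθ
    exact (hgeq θ hθ).symm


/-- Let T(x₁,x₂) = a x₁ + b x₂ be injective ℝ² → ℂ, and let F be a continuous branch
of log(a z₁ + b z₂) on a simply connected open neighbourhood U ⊂ ℂ² of the punctured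
circle {(cos θ, sin θ) : 0 < θ < 2π} avoiding {a z₁ + b z₂ = 0}. Then the limits of
F along the circle at θ → 0⁺ and θ → 2π⁻ exist and differ by exactly ±2πi. -/
theorem stmt_18 (a b : ℂ)
    (htrans : ∀ x₁ x₂ : ℝ, a * x₁ + b * x₂ = 0 → x₁ = 0 ∧ x₂ = 0)
    (U : Set (ℂ × ℂ)) (hO : IsOpen U) (hconn : IsConnected U)
    (hsc : SimplyConnectedSpace U)
    (harc : ∀ θ ∈ Set.Ioo (0 : ℝ) (2 * π),
      (((Real.cos θ : ℂ), (Real.sin θ : ℂ)) : ℂ × ℂ) ∈ U)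
    (hL : ∀ z ∈ U, a * z.1 + b * z.2 ≠ 0)
    (F : ℂ × ℂ → ℂ) (hF : ContinuousOn F U)
    (hbr : ∀ z ∈ U, Complex.exp (F z) = a * z.1 + b * z.2) :
    ∃ l₁ l₂ : ℂ,
      Tendsto (fun θ : ℝ => F ((Real.cos θ : ℂ), (Real.sin θ : ℂ))) (𝓝[>] 0) (𝓝 l₁) ∧
      Tendsto (fun θ : ℝ => F ((Real.cos θ : ℂ), (Real.sin θ : ℂ))) (𝓝[<] (2 * π)) (𝓝 l₂) ∧
      (l₂ - l₁ = 2 * π * Complex.I ∨ l₂ - l₁ = -(2 * π * Complex.I)) := by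
  set p : ℂ := (a - Complex.I * b) / 2 with hp
  set q : ℂ := (a + Complex.I * b) / 2 with hq
  -- the key algebraic identity
  have hid : ∀ θ : ℝ, a * (Real.cos θ : ℂ) + b * (Real.sin θ : ℂ) =
      p * Complex.exp ((θ : ℂ) * Complex.I) + q * Complex.exp (-((θ : ℂ) * Complex.I)) := by
    intro θ
    rw [Complex.ofReal_cos, Complex.ofReal_sin, Complex.exp_mul_I,
      show -((θ : ℂ) * Complex.I) = (-(θ : ℂ)) * Complex.I by ring, Complex.exp_mul_I,
      Complex.cos_neg, Complex.sin_neg, hp, hq]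
    linear_combination (b * Complex.sin (θ : ℂ)) * Complex.I_mul_I
  -- |p| ≠ |q|
  have hne : ‖p‖ ≠ ‖q‖ := by
    intro habs
    by_cases hp0 : p = 0
    · have hq0 : q = 0 := by
        rwa [hp0, norm_zero, eq_comm, norm_eq_zero] at habs
      have ha : a = 0 := by
        have := congrArg₂ (· + ·) hp0 hq0
        simp [hp, hq] at this
        linear_combination this
      have hb : b = 0 := by
        have hIb : Complex.I * b = q - p := by rw [hp, hq]; ring
        rw [hq0, hp0, sub_zero] at hIb
        exact (mul_eq_zero.mp hIb).resolve_left Complex.I_ne_zero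
      obtain ⟨h1, _⟩ := htrans 1 0 (by simp [ha, hb])
      norm_num at h1
    · -- p ≠ 0, set z = -q/p with |z| = 1 and find θ with e^{2iθ} = z
      set z : ℂ := -q / p with hz
      have hz1 : ‖z‖ = 1 := by
        rw [hz, norm_div, norm_neg, ← habs, div_self]
        simpa using hp0
      set θ : ℝ := Complex.arg z / 2 with hθ
      have hez : Complex.exp (((2 * θ : ℝ) : ℂ) * Complex.I) = z := by
        have h := Complex.norm_mul_exp_arg_mul_I z
        rw [hz1, Complex.ofReal_one, one_mul] at h
        rw [hθ]
        rw [show ((2 * (Complex.arg z / 2) : ℝ) : ℂ) * Complex.I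
            = ((Complex.arg z : ℝ) : ℂ) * Complex.I by push_cast; ring]
        exact h
      have hzero : a * (Real.cos θ : ℂ) + b * (Real.sin θ : ℂ) = 0 := by
        rw [hid θ]
        have h2 : Complex.exp ((θ : ℂ) * Complex.I) * Complex.exp ((θ : ℂ) * Complex.I) = z := by
          rw [← Complex.exp_add, ← hez]; congr 1; push_cast; ring
        have hE0 : Complex.exp (-((θ : ℂ) * Complex.I)) ≠ 0 := Complex.exp_ne_zero _
        have : p * Complex.exp ((θ : ℂ) * Complex.I) * Complex.exp ((θ : ℂ) * Complex.I) = -q := by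
          rw [mul_assoc, h2, hz]
          field_simp
        rw [Complex.exp_neg]
        have hEne := Complex.exp_ne_zero ((θ : ℂ) * Complex.I)
        field_simp
        linear_combination this
      obtain ⟨hc, hs⟩ := htrans (Real.cos θ) (Real.sin θ) hzero
      have := Real.sin_sq_add_cos_sq θ
      rw [hc, hs] at this
      norm_num at this
  rcases hne.lt_or_gt with hlt | hlt
  · -- |p| < |q| : use θ ↦ Laux q p (-θ), increment -2πi
    have hLexp : ∀ θ : ℝ, Complex.exp (Laux q p (-θ)) =
        a * (Real.cos θ : ℂ) + b * (Real.sin θ : ℂ) := by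
      intro θ
      rw [Laux_exp q p hlt (-θ), hid θ]
      push_cast
      rw [show -(-(θ : ℂ) * Complex.I) = (θ : ℂ) * Complex.I by ring]
      ring
    obtain ⟨l₁, l₂, h1, h2, h3⟩ := master a b U harc hL F hF hbr (fun θ => Laux q p (-θ))
      ((Laux_continuous q p hlt).comp continuous_neg) hLexp
    refine ⟨l₁, l₂, h1, h2, Or.inr ?_⟩
    rw [neg_zero] at h3
    rw [h3]
    have hper := Laux_periodic q p (-(2 * π))
    rw [show -(2 * π) + 2 * π = (0 : ℝ) by ring] at hper
    linear_combination -hper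
  · -- |q| < |p| : use Laux p q, increment 2πi
    have hLexp : ∀ θ : ℝ, Complex.exp (Laux p q θ) =
        a * (Real.cos θ : ℂ) + b * (Real.sin θ : ℂ) := by
      intro θ
      rw [Laux_exp p q hlt θ, hid θ]
    obtain ⟨l₁, l₂, h1, h2, h3⟩ := master a b U harc hL F hF hbr (Laux p q)
      (Laux_continuous p q hlt) hLexp
    refine ⟨l₁, l₂, h1, h2, Or.inl ?_⟩
    rw [h3]
    have hper := Laux_periodic p q 0
    rw [zero_add] at hper
    linear_combination hper
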